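/- Let A be a finite category and k^• a weighting on A. Let X : A → Set be a functor with each set Xa finite, and suppose X is familially representable, i.e. X is isomorphic to a finite coproduct of representable functors A(a_i, −). Then the colimit of X is finite and |colim X| = ∑_a k^a · |Xa|, the sum being over all objects a of A. -/

import Mathlib

open CategoryTheory

/-- The coproduct of the representable functors `A(g i, -)`, `i : ι`. -/
def famRep {A : Type u} [Category.{v} A] {ι : Type u} (g : ι → A) :
    A ⥤ Type (max u v) where
  obj b := Σ i : ι, (g i ⟶ b)
  map f := TypeCat.ofHom fun p => ⟨p.1, p.2 ≫ f⟩

/-- Colimit cocone for `famRep g`, with point `ULift ι`. -/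
def famRepCocone {A : Type u} [Category.{v} A] {ι : Type u} (g : ι → A) :
    Limits.Cocone (famRep g) where
  pt := ULift.{v} ι
  ι := { app := fun b => TypeCat.ofHom fun (p : (famRep g).obj b) => (⟨p.1⟩ : ULift.{v} ι),
         naturality := fun _ _ _ => rfl }

def famRepIsColimit {A : Type u} [Category.{v} A] {ι : Type u} (g : ι → A) :
    Limits.IsColimit (famRepCocone g) where
  desc s := TypeCat.ofHom fun (p : ULift.{v} ι) =>
    s.ι.app (g p.down) (⟨p.down, 𝟙 _⟩ : Σ i : ι, (g i ⟶ g p.down))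
  fac s b := by
    ext (p : Σ i : ι, (g i ⟶ b))
    have h := ConcreteCategory.congr_hom (s.ι.naturality p.2) (⟨p.1, 𝟙 _⟩ : Σ i : ι, (g i ⟶ g p.1))
    simp only [famRep, types_comp_apply, Functor.const_obj_map, types_id_apply,
      Category.id_comp] at h
    change s.ι.app (g p.1) (⟨p.1, 𝟙 _⟩ : Σ i : ι, (g i ⟶ g p.1)) = _
    refine h.symm.trans ?_
    change s.ι.app b (⟨p.1, 𝟙 _ ≫ p.2⟩ : Σ i : ι, (g i ⟶ b)) = _
    rw [Category.id_comp]
    rfl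
  uniq s m hm := by
    ext (p : ULift.{v} ι)
    have := ConcreteCategory.congr_hom (hm (g p.down)) (⟨p.down, 𝟙 _⟩ : Σ i : ι, (g i ⟶ g p.down))
    exact this

/-- **Proposition 3.1** (Leinster). Let `A` be a finite category with a
weighting `k`, and let `X : A ⥤ Set` be a finite familially representable
functor (a finite coproduct of representables).  Then the colimit of `X` is
finite, of cardinality `∑_a k^a · |Xa|`. -/
theorem stmt_14 {A : Type u} [Category.{v} A] [Fintype A]
    [∀ a b : A, Fintype (a ⟶ b)]
    (k : A → ℚ) (hk : ∀ a : A, ∑ b : A, (Fintype.card (a ⟶ b) : ℚ) * k b = 1)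
    (X : A ⥤ Type (max u v)) [∀ a : A, Fintype (X.obj a)]
    (hfr : ∃ (ι : Type u) (_ : Fintype ι) (g : ι → A), Nonempty (X ≅ famRep g)) :
    Finite (Limits.colimit X) ∧
      (Nat.card (Limits.colimit X) : ℚ) =
        ∑ a : A, k a * (Fintype.card (X.obj a) : ℚ) := by
  obtain ⟨ι, hι, g, ⟨e⟩⟩ := hfr
  have ecolim : Limits.colimit X ≃ ULift.{v} ι := by
    exact
    ((Limits.HasColimit.isoOfNatIso e).trans
      (Limits.colimit.isoColimitCocone ⟨famRepCocone g, famRepIsColimit g⟩)).toEquiv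
  have hfin : Finite (Limits.colimit X) := Finite.of_equiv _ ecolim.symm
  refine ⟨hfin, ?_⟩
  have hcard : Nat.card (Limits.colimit X) = Fintype.card ι := by
    rw [Nat.card_congr ecolim, Nat.card_congr Equiv.ulift, Nat.card_eq_fintype_card]
  have hXa : ∀ a : A, (Fintype.card (X.obj a) : ℚ) =
      ∑ i : ι, (Fintype.card (g i ⟶ a) : ℚ) := by
    intro a
    have h : Fintype.card (X.obj a) = Fintype.card (Σ i : ι, (g i ⟶ a)) :=
      Fintype.card_congr ((e.app a).toEquiv.trans (Equiv.refl _))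
    rw [h]
    simp [Fintype.card_sigma]
  rw [hcard]
  calc (Fintype.card ι : ℚ) = ∑ i : ι, (1 : ℚ) := by simp
    _ = ∑ i : ι, ∑ a : A, (Fintype.card (g i ⟶ a) : ℚ) * k a := by
        exact Finset.sum_congr rfl fun i _ => (hk (g i)).symm
    _ = ∑ a : A, ∑ i : ι, (Fintype.card (g i ⟶ a) : ℚ) * k a := Finset.sum_comm
    _ = ∑ a : A, k a * (Fintype.card (X.obj a) : ℚ) := by
        refine Finset.sum_congr rfl fun a _ => ?_
        rw [hXa a, Finset.mul_sum]
        exact Finset.sum_congr rfl fun i _ => mul_comm _ _
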